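/- For every positive integer n, ∑_{k=1}^{n} C(n,k) (-1)^{k+1}/k^3 = (1/6)(H_n)^3 + (1/2) H_n H_n^{(2)} + (1/3) H_n^{(3)}. -/

import Mathlib

open Finset

lemma icc_to_range (f : ℕ → ℝ) (n : ℕ) :
    ∑ k ∈ Finset.Icc 1 n, f k = ∑ j ∈ Finset.range n, f (j + 1) := by
  rw [Finset.range_eq_Ico, Finset.sum_Ico_add' f 0 n (c := 1)]
  simp [Finset.Ico_add_one_right_eq_Icc]

noncomputable def Ss (s n : ℕ) : ℝ :=
  ∑ k ∈ Finset.Icc 1 n, (n.choose k : ℝ) * (-1 : ℝ) ^ (k + 1) / (k : ℝ) ^ s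

lemma Ss_zero (n : ℕ) (hn : 0 < n) : Ss 0 n = 1 := by
  have h := Int.alternating_sum_range_choose (n := n)
  rw [if_neg hn.ne'] at h
  have h' : ∑ i ∈ Finset.range (n + 1), (-1 : ℝ) ^ i * (n.choose i : ℝ) = 0 := by
    exact_mod_cast congrArg (Int.cast : ℤ → ℝ) h
  rw [Finset.sum_range_succ'] at h'
  simp only [pow_zero, Nat.choose_zero_right, Nat.cast_one, one_mul, mul_one] at h'
  unfold Ss
  rw [icc_to_range]
  have : ∀ j : ℕ, (n.choose (j+1) : ℝ) * (-1:ℝ)^(j+1+1) / ((j+1:ℕ):ℝ)^0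
      = -((-1:ℝ)^(j+1) * (n.choose (j+1) : ℝ)) := by
    intro j; ring_nf
  rw [Finset.sum_congr rfl fun j _ => this j, Finset.sum_neg_distrib]
  linarith [h']

lemma Ss_step (s n : ℕ) : Ss (s+1) (n+1) = Ss (s+1) n + Ss s (n+1) / ((n:ℝ)+1) := by
  have hsplit : ∀ j : ℕ, (((n+1).choose (j+1) : ℕ) : ℝ) * (-1:ℝ)^(j+1+1) / ((j+1:ℕ):ℝ)^(s+1)
      = (n.choose (j+1) : ℝ) * (-1:ℝ)^(j+1+1) / ((j+1:ℕ):ℝ)^(s+1)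
        + (n.choose j : ℝ) * (-1:ℝ)^(j+1+1) / ((j+1:ℕ):ℝ)^(s+1) := by
    intro j
    have : ((n+1).choose (j+1) : ℝ) = (n.choose j : ℝ) + (n.choose (j+1) : ℝ) := by
      rw [Nat.choose_succ_succ]; push_cast; ring
    rw [this]; ring
  have hshift : ∀ j : ℕ, (n.choose j : ℝ) * (-1:ℝ)^(j+1+1) / ((j+1:ℕ):ℝ)^(s+1)
      = (((n+1).choose (j+1) : ℕ) : ℝ) * (-1:ℝ)^(j+1+1) / ((j+1:ℕ):ℝ)^s / ((n:ℝ)+1) := by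
    intro j
    have hkey : ((n:ℝ)+1) * (n.choose j : ℝ) = (((j:ℝ)+1)) * (((n+1).choose (j+1) : ℕ) : ℝ) := by
      have h2 := congrArg (fun m : ℕ => (m : ℝ)) (Nat.add_one_mul_choose_eq n j)
      push_cast at h2; linarith
    have hj : ((j:ℝ)+1) ≠ 0 := by positivity
    have hn1 : ((n:ℝ)+1) ≠ 0 := by positivity
    have hjp : (((j+1:ℕ)):ℝ) = (j:ℝ)+1 := by push_cast; ring
    rw [hjp, pow_succ]
    field_simp
    linear_combination (-((j:ℝ)+1)^s) * hkey
  have hlast : (n.choose (n+1) : ℝ) = 0 := by simp [Nat.choose_eq_zero_of_lt]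
  unfold Ss
  rw [icc_to_range, icc_to_range, icc_to_range]
  rw [Finset.sum_congr rfl fun j _ => hsplit j, Finset.sum_add_distrib]
  congr 1
  · rw [Finset.sum_range_succ, hlast]
    simp
  · rw [Finset.sum_congr rfl fun j _ => hshift j, ← Finset.sum_div]

noncomputable def Hh (r n : ℕ) : ℝ := ∑ j ∈ Finset.Icc 1 n, (1:ℝ) / (j : ℝ) ^ r

lemma Hh_succ (r n : ℕ) : Hh (r) (n+1) = Hh r n + 1 / ((n:ℝ)+1)^r := by
  unfold Hh
  rw [Finset.sum_Icc_succ_top (by omega : 1 ≤ n + 1)]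
  push_cast; ring

lemma S1 (n : ℕ) : Ss 1 n = Hh 1 n := by
  induction n with
  | zero => simp [Ss, Hh]
  | succ m ih =>
      rw [show m + 1 = m + 1 from rfl, Ss_step 0 m, Ss_zero (m+1) (by omega), ih, Hh_succ]
      ring

lemma S2 (n : ℕ) : Ss 2 n = ((Hh 1 n)^2 + Hh 2 n) / 2 := by
  induction n with
  | zero => simp [Ss, Hh]
  | succ m ih =>
      have hx : ((m:ℝ)+1) ≠ 0 := by positivity
      rw [show (2:ℕ) = 1 + 1 from rfl, Ss_step 1 m, S1 (m+1), ih, Hh_succ, Hh_succ]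
      norm_num
      field_simp
      ring

lemma S3 (n : ℕ) : Ss 3 n
    = (Hh 1 n)^3 / 6 + Hh 1 n * Hh 2 n / 2 + Hh 3 n / 3 := by
  induction n with
  | zero => simp [Ss, Hh]
  | succ m ih =>
      have hx : ((m:ℝ)+1) ≠ 0 := by positivity
      rw [show (3:ℕ) = 2 + 1 from rfl, Ss_step 2 m, S2 (m+1), ih,
        Hh_succ, Hh_succ, Hh_succ]
      norm_num
      field_simp
      ring

theorem alternating_binomial_sum_three (n : ℕ) (hn : 0 < n) :
    ∑ k ∈ Finset.Icc 1 n, (n.choose k : ℝ) * (-1 : ℝ) ^ (k + 1) / (k : ℝ) ^ 3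
      = (1 / 6) * (∑ j ∈ Finset.Icc 1 n, (1 : ℝ) / j) ^ 3
        + (1 / 2) * (∑ j ∈ Finset.Icc 1 n, (1 : ℝ) / j)
            * (∑ j ∈ Finset.Icc 1 n, (1 : ℝ) / (j : ℝ) ^ 2)
        + (1 / 3) * ∑ j ∈ Finset.Icc 1 n, (1 : ℝ) / (j : ℝ) ^ 3 := by
  have e1 : ∑ j ∈ Finset.Icc 1 n, (1 : ℝ) / j = Hh 1 n := by
    unfold Hh; exact Finset.sum_congr rfl fun j _ => by rw [pow_one]
  have h := S3 n
  unfold Ss Hh at h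
  rw [h, e1]
  unfold Hh
  ring
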